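/- With the data of a ℂˣ-invariant precosheaf on discs centered at 0 (as in the context) and a group homomorphism χ : ℂˣ → ℂˣ, for all real numbers 0 < r ≤ R the extension map i_{r,R} sends the weight space F(r)_χ into the weight space F(R)_χ, and the induced ℂ-linear map F(r)_χ → F(R)_χ is bijective (a linear isomorphism). -/

import Mathlib

private lemma i_heq_congr (F : ℝ → Type*) [∀ r, AddCommGroup (F r)] [∀ r, Module ℂ (F r)]
    (i : ∀ r R : ℝ, F r →ₗ[ℂ] F R) {t1 t2 : ℝ} (s : ℝ) (h : t1 = t2)
    {a : F t1} {b : F t2} (hab : HEq a b) : i t1 s a = i t2 s b := by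
  subst h; rw [eq_of_heq hab]

theorem stmt_12 (F : ℝ → Type*) [∀ r, AddCommGroup (F r)] [∀ r, Module ℂ (F r)]
    (i : ∀ r R : ℝ, F r →ₗ[ℂ] F R)
    (σ : ∀ (q : ℂˣ) (r : ℝ), F r →ₗ[ℂ] F (‖(q : ℂ)‖ * r))
    (hi_id : ∀ r : ℝ, 0 < r → ∀ x : F r, i r r x = x)
    (hi_comp : ∀ r R S : ℝ, 0 < r → r ≤ R → R ≤ S → ∀ x : F r,
      i R S (i r R x) = i r S x)
    (hσ_id : ∀ r : ℝ, 0 < r → ∀ x : F r, HEq (σ 1 r x) x)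
    (hσ_comp : ∀ (q q' : ℂˣ) (r : ℝ), 0 < r → ∀ x : F r,
      HEq (σ q' (‖(q : ℂ)‖ * r) (σ q r x)) (σ (q' * q) r x))
    (hinv : ∀ (q : ℂˣ) (r R : ℝ), 0 < r → r ≤ R → ∀ x : F r,
      σ q R (i r R x)
        = i (‖(q : ℂ)‖ * r) (‖(q : ℂ)‖ * R) (σ q r x))
    (χ : ℂˣ →* ℂˣ) (r R : ℝ) (hr : 0 < r) (hrR : r ≤ R) :
    Set.BijOn (i r R)
      {x : F r | ∀ q : ℂˣ, ‖(q : ℂ)‖ < 1 →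
        i (‖(q : ℂ)‖ * r) r (σ q r x) = ((χ q : ℂ)) • x}
      {x : F R | ∀ q : ℂˣ, ‖(q : ℂ)‖ < 1 →
        i (‖(q : ℂ)‖ * R) R (σ q R x) = ((χ q : ℂ)) • x} := by
  have hR : 0 < R := hr.trans_le hrR
  set a : ℝ := r / (2 * R) with ha_def
  have ha : 0 < a := by positivity
  have ha1 : a < 1 := by
    rw [ha_def, div_lt_one (by positivity)]
    linarith
  have haR : a * R = r / 2 := by
    rw [ha_def]; field_simp
  have haRr : a * R ≤ r := by rw [haR]; linarith
  have haC : (a : ℂ) ≠ 0 := by exact_mod_cast ha.ne'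
  set q0 : ℂˣ := Units.mk0 (a : ℂ) haC with hq0_def
  have habs0 : ‖(q0 : ℂ)‖ = a := by
    simp [hq0_def, abs_of_pos ha]
  have hq0lt : ‖(q0 : ℂ)‖ < 1 := by rw [habs0]; exact ha1
  have hq0Rr : ‖(q0 : ℂ)‖ * R ≤ r := by rw [habs0]; exact haRr
  have hq0R : (0:ℝ) < ‖(q0 : ℂ)‖ * R := by rw [habs0]; positivity
  have hq0r : (0:ℝ) < ‖(q0 : ℂ)‖ * r := by rw [habs0]; positivity
  have hχ0 : (χ q0 : ℂ) ≠ 0 := (χ q0).ne_zero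
  -- key : weight vectors are determined by their image
  have key : ∀ x ∈ {x : F r | ∀ q : ℂˣ, ‖(q : ℂ)‖ < 1 →
      i (‖(q : ℂ)‖ * r) r (σ q r x) = ((χ q : ℂ)) • x},
      ((χ q0 : ℂ)) • x = i (‖(q0 : ℂ)‖ * R) r (σ q0 R (i r R x)) := by
    intro x hx
    rw [hinv q0 r R hr hrR x,
      hi_comp (‖(q0 : ℂ)‖ * r) (‖(q0 : ℂ)‖ * R) r hq0r
        (by nlinarith [norm_pos_iff.mpr q0.ne_zero]) hq0Rr,
      hx q0 hq0lt]
  constructor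
  · -- MapsTo
    intro x hx
    intro q hq
    have hqpos : (0:ℝ) < ‖(q : ℂ)‖ := norm_pos_iff.mpr q.ne_zero
    rw [hinv q r R hr hrR x,
      hi_comp (‖(q : ℂ)‖ * r) (‖(q : ℂ)‖ * R) R
        (by positivity) (by nlinarith) (by nlinarith),
      ← hi_comp (‖(q : ℂ)‖ * r) r R (by positivity) (by nlinarith) hrR,
      hx q hq, map_smul]
  constructor
  · -- InjOn
    intro x hx y hy hxy
    have h1 := key x hx
    have h2 := key y hy
    rw [hxy, ← h2] at h1
    have := congrArg (fun z => (χ q0 : ℂ)⁻¹ • z) h1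
    simpa [smul_smul, inv_mul_cancel₀ hχ0] using this
  · -- SurjOn
    intro y hy
    set z : F r := i (‖(q0 : ℂ)‖ * R) r (σ q0 R y) with hz_def
    set x : F r := ((χ q0 : ℂ))⁻¹ • z with hx_def
    have hirx : i r R x = y := by
      rw [hx_def, map_smul, hz_def,
        hi_comp (‖(q0 : ℂ)‖ * R) r R hq0R hq0Rr hrR,
        hy q0 hq0lt, smul_smul, inv_mul_cancel₀ hχ0, one_smul]
    refine ⟨x, ?_, hirx⟩
    intro q' hq'
    have hq'pos : (0:ℝ) < ‖(q' : ℂ)‖ := norm_pos_iff.mpr q'.ne_zero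
    -- compute i (|q'| r) r (σ q' r z) = (χ q' : ℂ) • z
    have main : i (‖(q' : ℂ)‖ * r) r (σ q' r z) = ((χ q' : ℂ)) • z := by
      have step1 : σ q' r z
          = i (‖(q' : ℂ)‖ * (‖(q0 : ℂ)‖ * R))
              (‖(q' : ℂ)‖ * r) (σ q' (‖(q0 : ℂ)‖ * R) (σ q0 R y)) :=
        hinv q' (‖(q0 : ℂ)‖ * R) r hq0R hq0Rr (σ q0 R y)
      rw [step1,
        hi_comp (‖(q' : ℂ)‖ * (‖(q0 : ℂ)‖ * R))
          (‖(q' : ℂ)‖ * r) r (by positivity) (by nlinarith) (by nlinarith)]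
      have e1 : ‖(q' : ℂ)‖ * (‖(q0 : ℂ)‖ * R)
          = ‖((↑(q' * q0) : ℂ))‖ * R := by
        rw [Units.val_mul, norm_mul]; ring
      rw [i_heq_congr F i r e1 (hσ_comp q0 q' R hR y)]
      have e2 : ‖((↑(q' * q0) : ℂ))‖ * R
          = ‖(q0 : ℂ)‖ * (‖(q' : ℂ)‖ * R) := by
        rw [Units.val_mul, norm_mul]; ring
      rw [mul_comm q' q0] at *
      rw [i_heq_congr F i r e2 (hσ_comp q' q0 R hR y).symm]
      rw [← hi_comp (‖(q0 : ℂ)‖ * (‖(q' : ℂ)‖ * R))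
          (‖(q0 : ℂ)‖ * R) r
          (mul_pos (norm_pos_iff.mpr q0.ne_zero) (mul_pos hq'pos hR))
          (by nlinarith [norm_pos_iff.mpr q0.ne_zero]) hq0Rr,
        ← hinv q0 (‖(q' : ℂ)‖ * R) R (mul_pos hq'pos hR) (by nlinarith)
          (σ q' R y),
        hy q' hq', map_smul, map_smul]
    rw [hx_def, map_smul, map_smul, main, smul_smul, smul_smul, mul_comm]
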